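/- Let n be a nonempty finite type and let M be an n × n real matrix such that the matrix powers M^t converge entrywise as t → ∞ to a matrix Π. Then there exist C ≥ 0 and γ ∈ (0, 1) such that |(M^t − Π)(i, j)| ≤ C γ^t for all t ≥ 0 and all indices i, j (geometric convergence of matrix powers to their limit, the Perron–Frobenius-type estimate used in the proof of Proposition 1). -/

import Mathlib

open Filter Finset Matrix

/-- A row-stochastic matrix. -/
def RowStochastic {S : Type*} [Fintype S] (P : Matrix S S ℝ) : Prop :=
  (∀ s s', 0 ≤ P s s') ∧ ∀ s, ∑ s', P s s' = 1

/-- Entrywise `L¹` size of a matrix. -/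
noncomputable def entSum {n : Type*} [Fintype n] (A : Matrix n n ℝ) : ℝ :=
  ∑ i, ∑ j, |A i j|

lemma entSum_nonneg {n : Type*} [Fintype n] (A : Matrix n n ℝ) : 0 ≤ entSum A :=
  Finset.sum_nonneg fun _ _ => Finset.sum_nonneg fun _ _ => abs_nonneg _

lemma abs_le_entSum {n : Type*} [Fintype n] (A : Matrix n n ℝ) (i j : n) :
    |A i j| ≤ entSum A := by
  unfold entSum
  calc |A i j| ≤ ∑ j', |A i j'| :=
        Finset.single_le_sum (f := fun j' => |A i j'|) (fun _ _ => abs_nonneg _) (mem_univ j)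
  _ ≤ ∑ i', ∑ j', |A i' j'| :=
        Finset.single_le_sum (f := fun i' => ∑ j', |A i' j'|)
          (fun i' _ => Finset.sum_nonneg fun _ _ => abs_nonneg _) (mem_univ i)

lemma col_le_entSum {n : Type*} [Fintype n] (A : Matrix n n ℝ) (k : n) :
    ∑ i, |A i k| ≤ entSum A :=
  Finset.sum_le_sum fun i _ =>
    Finset.single_le_sum (f := fun j => |A i j|) (fun _ _ => abs_nonneg _) (mem_univ k)

lemma entSum_mul {n : Type*} [Fintype n] (A B : Matrix n n ℝ) :
    entSum (A * B) ≤ entSum A * entSum B := by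
  have h1 : entSum (A * B) ≤ ∑ k, (∑ i, |A i k|) * (∑ j, |B k j|) := by
    unfold entSum
    calc ∑ i, ∑ j, |(A * B) i j| ≤ ∑ i, ∑ j, ∑ k, |A i k| * |B k j| := by
          refine Finset.sum_le_sum fun i _ => Finset.sum_le_sum fun j _ => ?_
          simp only [Matrix.mul_apply]
          calc |∑ k, A i k * B k j| ≤ ∑ k, |A i k * B k j| := Finset.abs_sum_le_sum_abs _ _
          _ = ∑ k, |A i k| * |B k j| := by simp [abs_mul]
    _ = ∑ i, ∑ k, ∑ j, |A i k| * |B k j| :=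
          Finset.sum_congr rfl fun i _ => Finset.sum_comm
    _ = ∑ k, ∑ i, ∑ j, |A i k| * |B k j| := Finset.sum_comm
    _ = ∑ k, (∑ i, |A i k|) * (∑ j, |B k j|) := by
          refine Finset.sum_congr rfl fun k _ => ?_
          rw [Finset.sum_mul]
          exact Finset.sum_congr rfl fun i _ => by rw [Finset.mul_sum]
  refine h1.trans ?_
  calc ∑ k, (∑ i, |A i k|) * (∑ j, |B k j|)
      ≤ ∑ k, entSum A * (∑ j, |B k j|) :=
        Finset.sum_le_sum fun k _ => mul_le_mul_of_nonneg_right (col_le_entSum A k)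
          (Finset.sum_nonneg fun _ _ => abs_nonneg _)
  _ = entSum A * entSum B := by rw [← Finset.mul_sum]; rfl

lemma entSum_pow_mul {n : Type*} [Fintype n] [DecidableEq n] (X Y : Matrix n n ℝ) (q : ℕ) :
    entSum (X ^ q * Y) ≤ entSum X ^ q * entSum Y := by
  induction q with
  | zero => simp
  | succ q ih =>
      rw [pow_succ', mul_assoc]
      calc entSum (X * (X ^ q * Y)) ≤ entSum X * entSum (X ^ q * Y) := entSum_mul _ _
      _ ≤ entSum X * (entSum X ^ q * entSum Y) :=
          mul_le_mul_of_nonneg_left ih (entSum_nonneg X)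
      _ = entSum X ^ (q + 1) * entSum Y := by ring

lemma limits_alg {n : Type*} [Fintype n] [DecidableEq n] (M Plim : Matrix n n ℝ)
    (hconv : Filter.Tendsto (fun t : ℕ => M ^ t) Filter.atTop (nhds Plim)) :
    M * Plim = Plim ∧ Plim * M = Plim ∧ Plim * Plim = Plim := by
  have h1 : Tendsto (fun t : ℕ => M ^ (t + 1)) atTop (nhds Plim) :=
    hconv.comp (tendsto_add_atTop_nat 1)
  have h1' : Tendsto (fun t : ℕ => M * M ^ t) atTop (nhds (M * Plim)) :=
    tendsto_const_nhds.mul hconv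
  have h1'' : Tendsto (fun t : ℕ => M ^ t * M) atTop (nhds (Plim * M)) :=
    hconv.mul tendsto_const_nhds
  have e1 : M * Plim = Plim := by
    refine tendsto_nhds_unique ?_ h1
    simpa only [pow_succ'] using h1'
  have e2 : Plim * M = Plim := by
    refine tendsto_nhds_unique ?_ h1
    simpa only [pow_succ] using h1''
  have h2 : Tendsto (fun t : ℕ => M ^ t * M ^ t) atTop (nhds (Plim * Plim)) :=
    hconv.mul hconv
  have h3 : Tendsto (fun t : ℕ => M ^ (2 * t)) atTop (nhds Plim) :=
    hconv.comp (tendsto_atTop_mono (fun t => Nat.le_mul_of_pos_left t two_pos) tendsto_id)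
  have e3 : Plim * Plim = Plim := by
    refine tendsto_nhds_unique ?_ h3
    simpa only [two_mul, pow_add] using h2
  exact ⟨e1, e2, e3⟩

lemma pow_sub_eq {n : Type*} [Fintype n] [DecidableEq n] (M Plim : Matrix n n ℝ)
    (e1 : M * Plim = Plim) (e2 : Plim * M = Plim) (e3 : Plim * Plim = Plim) :
    ∀ t : ℕ, 1 ≤ t → (M - Plim) ^ t = M ^ t - Plim := by
  have hMp : ∀ t : ℕ, M ^ t * Plim = Plim := by
    intro t
    induction t with
    | zero => simp
    | succ t ih => rw [pow_succ, mul_assoc, e1, ih]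
  intro t ht
  induction t with
  | zero => omega
  | succ t ih =>
      rcases Nat.eq_or_lt_of_le ht with h | h
      · simp [← h]
      · have ht' : 1 ≤ t := by omega
        rw [pow_succ, ih ht', sub_mul, mul_sub, mul_sub, hMp, pow_succ, e2, e3]
        abel

/-- Geometric convergence of matrix powers to their limit (the Perron–Frobenius-type estimate):
if `M ^ t` converges entrywise to `Plim`, then the convergence is geometrically fast. -/
theorem stmt14 {n : Type*} [Fintype n] [DecidableEq n] [Nonempty n]
    (M Plim : Matrix n n ℝ)
    (hconv : Filter.Tendsto (fun t : ℕ => M ^ t) Filter.atTop (nhds Plim)) :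
    ∃ C γ : ℝ, 0 ≤ C ∧ 0 < γ ∧ γ < 1 ∧
      ∀ t : ℕ, ∀ i j, |(M ^ t - Plim) i j| ≤ C * γ ^ t := by
  obtain ⟨e1, e2, e3⟩ := limits_alg M Plim hconv
  set N : Matrix n n ℝ := M - Plim with hN
  have hNt := pow_sub_eq M Plim e1 e2 e3
  -- entrywise convergence
  have heach : ∀ i j : n, Tendsto (fun t : ℕ => (M ^ t) i j) atTop (nhds (Plim i j)) := by
    intro i j
    exact (((continuous_apply j).comp (continuous_apply i)).tendsto Plim).comp hconv
  have hent0 : Tendsto (fun t : ℕ => entSum (M ^ t - Plim)) atTop (nhds 0) := by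
    have : Tendsto (fun t : ℕ => ∑ i, ∑ j, |(M ^ t - Plim) i j|) atTop
        (nhds (∑ i : n, ∑ j : n, (0 : ℝ))) := by
      refine tendsto_finset_sum _ fun i _ => tendsto_finset_sum _ fun j _ => ?_
      have : Tendsto (fun t : ℕ => (M ^ t - Plim) i j) atTop (nhds 0) := by
        have := (heach i j).sub
          (tendsto_const_nhds : Tendsto (fun _ : ℕ => Plim i j) atTop (nhds (Plim i j)))
        simpa [Matrix.sub_apply] using this
      simpa using this.abs
    simpa [entSum] using this
  -- find t0 ≥ 1 with entSum (N ^ t0) ≤ 1/2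
  have hev : ∀ᶠ t in atTop, entSum (M ^ t - Plim) ≤ 1 / 2 :=
    hent0.eventually (eventually_le_nhds (by norm_num))
  obtain ⟨t1, ht1⟩ := eventually_atTop.mp hev
  set t0 : ℕ := t1 + 1 with ht0def
  have ht0pos : 1 ≤ t0 := Nat.le_add_left 1 t1
  have ha : entSum (N ^ t0) ≤ 1 / 2 := by
    rw [hNt t0 ht0pos]; exact ht1 t0 (by omega)
  have ha0 : 0 ≤ entSum (N ^ t0) := entSum_nonneg _
  -- the geometric rate
  set γ : ℝ := (1 / 2 : ℝ) ^ ((t0 : ℝ)⁻¹) with hγdef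
  have hγpos : 0 < γ := Real.rpow_pos_of_pos (by norm_num) _
  have hγlt : γ < 1 := by
    apply Real.rpow_lt_one (by norm_num) (by norm_num)
    have : (0 : ℝ) < (t0 : ℝ) := by exact_mod_cast ht0pos
    positivity
  have hγt0 : γ ^ t0 = 1 / 2 := by
    rw [hγdef, ← Real.rpow_natCast ((1 / 2 : ℝ) ^ ((t0 : ℝ)⁻¹)) t0, ← Real.rpow_mul (by norm_num)]
    rw [inv_mul_cancel₀ (Nat.cast_ne_zero.mpr (by omega) : (t0 : ℝ) ≠ 0)]
    simp
  -- bound for small powers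
  set B : ℝ := ∑ r ∈ Finset.range t0, entSum (N ^ r) with hBdef
  have hB0 : 0 ≤ B := Finset.sum_nonneg fun _ _ => entSum_nonneg _
  have hBr : ∀ r < t0, entSum (N ^ r) ≤ B := fun r hr =>
    Finset.single_le_sum (f := fun r => entSum (N ^ r)) (fun _ _ => entSum_nonneg _)
      (Finset.mem_range.mpr hr)
  set C : ℝ := 2 * B + entSum ((1 : Matrix n n ℝ) - Plim) with hCdef
  have hC0 : 0 ≤ C := by
    rw [hCdef]
    have := entSum_nonneg ((1 : Matrix n n ℝ) - Plim)
    linarith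
  refine ⟨C, γ, hC0, hγpos, hγlt, ?_⟩
  intro t i j
  rcases Nat.eq_zero_or_pos t with rfl | ht
  · simp only [pow_zero, mul_one]
    calc |((1 : Matrix n n ℝ) - Plim) i j| ≤ entSum ((1 : Matrix n n ℝ) - Plim) :=
          abs_le_entSum _ i j
    _ ≤ C := by rw [hCdef]; linarith
  · -- t ≥ 1
    rw [← hNt t ht]
    set q : ℕ := t / t0 with hq
    set r : ℕ := t % t0 with hr
    have htqr : t0 * q + r = t := by rw [hq, hr]; exact Nat.div_add_mod t t0
    have hrlt : r < t0 := Nat.mod_lt t (by omega)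
    have hsplit : N ^ t = (N ^ t0) ^ q * N ^ r := by
      rw [← pow_mul, ← pow_add, htqr]
    have key : entSum (N ^ t) ≤ (1 / 2) ^ q * B := by
      rw [hsplit]
      calc entSum ((N ^ t0) ^ q * N ^ r) ≤ entSum (N ^ t0) ^ q * entSum (N ^ r) :=
            entSum_pow_mul _ _ q
      _ ≤ (1 / 2) ^ q * B :=
            mul_le_mul (pow_le_pow_left₀ ha0 ha q) (hBr r hrlt) (entSum_nonneg _)
              (by positivity)
    have hγr : γ ^ t0 ≤ γ ^ r := pow_le_pow_of_le_one hγpos.le hγlt.le hrlt.le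
    have hhalf : (1 / 2 : ℝ) ^ q = γ ^ (t0 * q) := by rw [pow_mul, hγt0]
    have hup : (1 / 2 : ℝ) ^ q ≤ 2 * γ ^ t := by
      rw [hhalf]
      have : γ ^ t = γ ^ (t0 * q) * γ ^ r := by rw [← pow_add, htqr]
      rw [this]
      have hγrpos : 0 < γ ^ r := pow_pos hγpos r
      have h12 : (1 / 2 : ℝ) ≤ γ ^ r := hγt0 ▸ hγr
      nlinarith [pow_pos hγpos (t0 * q)]
    calc |(N ^ t) i j| ≤ entSum (N ^ t) := abs_le_entSum _ i j
    _ ≤ (1 / 2) ^ q * B := key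
    _ ≤ 2 * γ ^ t * B := mul_le_mul_of_nonneg_right hup hB0
    _ ≤ C * γ ^ t := by
          have hpt : 0 < γ ^ t := pow_pos hγpos t
          have he : 0 ≤ entSum ((1 : Matrix n n ℝ) - Plim) := entSum_nonneg _
          rw [hCdef]
          nlinarith
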